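/- Let K ≥ 0 and let φ be a formula of the bounded discrete-time STL fragment in which every atomic function g : ℝⁿ → ℝ is Lipschitz with constant K with respect to the sup norm on ℝⁿ. Then for all signals ξ, ξ' : ℕ → ℝⁿ, all d ≥ 0 with ‖ξ(s) − ξ'(s)‖_∞ ≤ d for every s ∈ ℕ, and all t ∈ ℕ, we have |ρ^φ(ξ, t) − ρ^φ(ξ', t)| ≤ K·d. -/

import Mathlib

/-- Bounded discrete-time STL fragment over signals `ℕ → ℝⁿ`. -/
inductive STL (n : ℕ) : Type where
  | atom : ((Fin n → ℝ) → ℝ) → STL n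
  | not : STL n → STL n
  | and : STL n → STL n → STL n
  | F : (a b : ℕ) → a ≤ b → STL n → STL n

/-- Boolean satisfaction of an STL formula by signal `ξ` at time `t`. -/
def STL.sat {n : ℕ} : STL n → (ℕ → Fin n → ℝ) → ℕ → Prop
  | .atom g, ξ, t => g (ξ t) > 0
  | .not φ, ξ, t => ¬ φ.sat ξ t
  | .and φ ψ, ξ, t => φ.sat ξ t ∧ ψ.sat ξ t
  | .F a b _ φ, ξ, t => ∃ t', t + a ≤ t' ∧ t' ≤ t + b ∧ φ.sat ξ t'

/-- Quantitative robustness of an STL formula on signal `ξ` at time `t`. -/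
def STL.rob {n : ℕ} : STL n → (ℕ → Fin n → ℝ) → ℕ → ℝ
  | .atom g, ξ, t => g (ξ t)
  | .not φ, ξ, t => - φ.rob ξ t
  | .and φ ψ, ξ, t => min (φ.rob ξ t) (ψ.rob ξ t)
  | .F a b h φ, ξ, t =>
      (Finset.Icc (t + a) (t + b)).sup'
        (Finset.nonempty_Icc.mpr (by omega)) (fun t' => φ.rob ξ t')

/-- All atomic functions of the formula are Lipschitz with constant `K` w.r.t. the
sup norm on `ℝⁿ`. -/
def STL.atomsLipschitz {n : ℕ} (K : ℝ) : STL n → Prop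
  | .atom g => ∀ x y : Fin n → ℝ, |g x - g y| ≤ K * ‖x - y‖
  | .not φ => φ.atomsLipschitz K
  | .and φ ψ => φ.atomsLipschitz K ∧ ψ.atomsLipschitz K
  | .F _ _ _ φ => φ.atomsLipschitz K

/-- The robustness inherits the Lipschitz constant of the worst atomic predicate:
if all atoms are `K`-Lipschitz and the two signals are pointwise within `d`
in sup norm, then the robustness values differ by at most `K·d`. -/
theorem stmt_11 {n : ℕ} (K : ℝ) (hK : 0 ≤ K) (φ : STL n)
    (hφ : φ.atomsLipschitz K)
    (ξ ξ' : ℕ → Fin n → ℝ) (d : ℝ) (hd : 0 ≤ d)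
    (hclose : ∀ s : ℕ, ‖ξ s - ξ' s‖ ≤ d) (t : ℕ) :
    |φ.rob ξ t - φ.rob ξ' t| ≤ K * d := by
  induction φ generalizing t with
  | atom g =>
      calc |g (ξ t) - g (ξ' t)| ≤ K * ‖ξ t - ξ' t‖ := hφ _ _
        _ ≤ K * d := mul_le_mul_of_nonneg_left (hclose t) hK
  | not φ ih =>
      simp only [STL.rob, neg_sub_neg, abs_sub_comm]
      exact ih hφ t
  | and φ ψ ihφ ihψ =>
      simp only [STL.rob]
      exact (abs_min_sub_min_le_max _ _ _ _).trans (max_le (ihφ hφ.1 t) (ihψ hφ.2 t))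
  | F a b hab φ ih =>
      simp only [STL.rob]
      rw [abs_sub_le_iff]
      constructor <;>
      · rw [sub_le_iff_le_add, Finset.sup'_le_iff]
        intro s hs
        refine le_trans ?_ (add_le_add_right (Finset.le_sup' _ hs) _)
        have := abs_le.mp (ih hφ s)
        linarith [this.1, this.2]
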